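/- Suppose f(q) = q^{-1} + Σ_{k≥1} a_k q^k is completely (2+)-replicable with replicates f^{[n]}. Then for every k ≥ 1: a_{4k+2} = Σ_{j=1}^{k} a_j·a_{2k+1-j} + a_{2k+2}. -/

import Mathlib

noncomputable section

/-- Formal `q`-series with rational coefficients (Laurent series in `q`). -/
abbrev Ser := LaurentSeries ℚ

/-- `f = q⁻¹ + Σ_{k≥1} a_k q^k`: the coefficient of `q⁻¹` is `1` and all other
coefficients in non-positive degrees vanish. -/
def IsNormalized (f : Ser) : Prop :=
  f.coeff (-1) = 1 ∧ ∀ k : ℤ, k ≤ 0 → k ≠ -1 → f.coeff k = 0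

/-- `P` is the `n`-th Faber polynomial of `f`: the unique monic polynomial of degree
`n` such that `P(f(q)) − q^{-n}` has only positive powers of `q`. -/
def IsFaber (f : Ser) (n : ℕ) (P : Polynomial ℚ) : Prop :=
  P.Monic ∧ P.natDegree = n ∧
  (Polynomial.aeval f P).coeff (-(n : ℤ)) = 1 ∧
  ∀ k : ℤ, k ≤ 0 → k ≠ -(n : ℤ) → (Polynomial.aeval f P).coeff k = 0

/-- The coefficient of `q^k` in the left-hand side
`Σ_{ad=n, 0≤b<d} f^{[a]}((aτ+b)/d) + Σ_{ad=n, d even, 0≤b<d} f^{[a√2]}((2aτ+b)/d)`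
of the `(2+)`-replication identity, where `F a` is the series `f^{[a]}` and `G a`
is the series `f^{[a√2]}`. -/
def RepLHS (F G : ℕ → Ser) (n : ℕ) (k : ℤ) : ℚ :=
  (∑ x ∈ n.divisorsAntidiagonal,
    if (x.1 : ℤ) ∣ k then (x.2 : ℚ) * (F x.1).coeff ((x.2 : ℤ) * k / (x.1 : ℤ)) else 0)
  + (∑ x ∈ n.divisorsAntidiagonal,
    if Even x.2 ∧ (2 * (x.1 : ℤ)) ∣ k then
      (x.2 : ℚ) * (G x.1).coeff ((x.2 : ℤ) * k / (2 * (x.1 : ℤ))) else 0)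

/-- The `(2+)`-replication identity of index `n` for `f` with replicates
`F a = f^[a]`, `G a = f^[a√2]`, expressed on `q`-expansion coefficients:
`Σ_{ad=n, 0≤b<d} f^{[a]}((aτ+b)/d) + Σ_{ad=n, d even, 0≤b<d} f^{[a√2]}((2aτ+b)/d)
  = P_{n,f}(f(τ))`. -/
def RepEq (F G : ℕ → Ser) (f : Ser) (n : ℕ) : Prop :=
  ∀ P : Polynomial ℚ, IsFaber f n P →
    ∀ k : ℤ, RepLHS F G n k = (Polynomial.aeval f P).coeff k

/-- Multiplication on the index set `ℕ ∪ √2·ℕ`, encoding `(n, b)` as `n·(√2)^b`: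
`(√2·n)·(√2·m) = 2nm`. -/
def indexMul (r s : ℕ × Bool) : ℕ × Bool :=
  (r.1 * s.1 * (if r.2 ∧ s.2 then 2 else 1), xor r.2 s.2)

/-- `Φ` is a completely `(2+)`-replicable system: `Φ r` is the replicate `f^{[r]}` for
`r ∈ ℕ ∪ √2·ℕ`, and every `Φ r` is `(2+)`-replicable with `(Φ r)^{[m]} = Φ (r·m)`. -/
def IsCR2System (Φ : ℕ × Bool → Ser) : Prop :=
  ∀ r : ℕ × Bool, 1 ≤ r.1 → ∀ n : ℕ, 1 ≤ n →
    RepEq (fun a => Φ (indexMul r (a, false))) (fun a => Φ (indexMul r (a, true))) (Φ r) n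

/-- `f` is completely `(2+)`-replicable. -/
def Completely2PlusReplicable (f : Ser) : Prop :=
  ∃ Φ : ℕ × Bool → Ser, Φ (1, false) = f ∧ IsCR2System Φ

lemma gg_coeff (g : Ser) (hg : ∀ m : ℤ, m ≤ 0 → g.coeff m = 0) (n : ℤ) :
    (g * g).coeff n = ∑ i ∈ Finset.Icc (1:ℤ) (n-1), g.coeff i * g.coeff (n - i) := by
  classical
  rw [HahnSeries.coeff_mul]
  have hemb : Function.Injective (fun i : ℤ => (i, n - i)) := by
    intro a b h; simpa using congrArg Prod.fst h
  have key := Finset.sum_subset (s₁ := Finset.antidiagonal g.isPWO_support g.isPWO_support n)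
    (s₂ := (Finset.Icc (1:ℤ) (n-1)).map ⟨fun i => (i, n - i), hemb⟩)
    (f := fun p => g.coeff p.1 * g.coeff p.2) ?_ ?_
  · rw [key, Finset.sum_map]; rfl
  · intro x hx
    rw [Finset.mem_antidiagonal] at hx
    obtain ⟨h1, h2, h3⟩ := hx
    rw [HahnSeries.mem_support] at h1 h2
    have hx1 : 1 ≤ x.1 := by by_contra h; exact h1 (hg _ (by omega))
    have hx2 : 1 ≤ x.2 := by by_contra h; exact h2 (hg _ (by omega))
    simp only [Finset.mem_map, Finset.mem_Icc, Function.Embedding.coeFn_mk]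
    exact ⟨x.1, ⟨hx1, by omega⟩, by ext <;> simp <;> omega⟩
  · intro x hx hnx
    rw [Finset.mem_antidiagonal] at hnx
    simp only [Finset.mem_map, Finset.mem_Icc, Function.Embedding.coeFn_mk] at hx
    obtain ⟨i, hi, rfl⟩ := hx
    simp only [HahnSeries.mem_support, not_and, ne_eq, not_not] at hnx
    by_cases h1 : g.coeff i = 0
    · simp [h1]
    · by_cases h2 : g.coeff (n - i) = 0
      · simp [h2]
      · exact absurd (hnx h1 h2) (by omega)

lemma algebraMap_coeff (c : ℚ) (m : ℤ) :
    (algebraMap ℚ Ser c).coeff m = if m = 0 then c else 0 := by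
  have h : (algebraMap ℚ Ser) = (HahnSeries.C : ℚ →+* HahnSeries ℤ ℚ) :=
    Subsingleton.elim _ _
  rw [h, HahnSeries.C_apply, HahnSeries.coeff_single]
  rcases eq_or_ne m 0 with rfl | hm
  · simp
  · simp [hm]


/-- If `f = q⁻¹ + Σ a_k q^k` is completely `(2+)`-replicable then
`a_{4k+2} = Σ_{j=1}^{k} a_j·a_{2k+1-j} + a_{2k+2}` for all `k ≥ 1`. -/
theorem coeff_four_k_add_two (f : Ser) (hnorm : IsNormalized f)
    (hf : Completely2PlusReplicable f) (k : ℕ) (hk : 1 ≤ k) :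
    f.coeff (4 * (k : ℤ) + 2)
      = (∑ j ∈ Finset.Icc 1 k, f.coeff (j : ℤ) * f.coeff (2 * (k : ℤ) + 1 - (j : ℤ)))
        + f.coeff (2 * (k : ℤ) + 2) := by
  obtain ⟨Φ, hΦ, hsys⟩ := hf
  obtain ⟨h1, h0⟩ := hnorm
  set s : Ser := HahnSeries.single (-1:ℤ) (1:ℚ) with hs
  set g : Ser := f - s with hgdef
  have hgc : ∀ m : ℤ, g.coeff m = f.coeff m - (if m = -1 then 1 else 0) := by
    intro m; rw [hgdef, HahnSeries.coeff_sub, hs, HahnSeries.coeff_single]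
    rcases eq_or_ne m (-1) with rfl | hm
    · simp
    · simp [hm]
  have hg0 : ∀ m : ℤ, m ≤ 0 → g.coeff m = 0 := by
    intro m hm
    rcases eq_or_ne m (-1) with rfl | hne
    · simp [hgc, h1]
    · simp [hgc, hne, h0 m hm hne]
  have hgpos : ∀ m : ℤ, 1 ≤ m → g.coeff m = f.coeff m := by
    intro m hm; rw [hgc, if_neg (by omega)]; ring
  have hfs : f = s + g := by rw [hgdef]; ring
  -- coefficient formula for f*f
  have hff : ∀ m : ℤ, (f*f).coeff m
      = (if m = -2 then 1 else 0) + 2 * g.coeff (m+1) + (g*g).coeff m := by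
    intro m
    have e1 : (s * g).coeff m = g.coeff (m+1) := by
      have := HahnSeries.coeff_single_mul_add (r := (1:ℚ)) (x := g) (a := m+1) (b := (-1:ℤ))
      simpa using this
    have e2 : (g * s).coeff m = g.coeff (m+1) := by
      have := HahnSeries.coeff_mul_single_add (r := (1:ℚ)) (x := g) (a := m+1) (b := (-1:ℤ))
      simpa using this
    have e3 : (s * s) = HahnSeries.single (-2:ℤ) (1:ℚ) := by
      rw [hs, HahnSeries.single_mul_single]; norm_num
    have hexp : f * f = s*s + (s*g + (g*s + g*g)) := by rw [hfs]; ring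
    rw [hexp]
    simp only [HahnSeries.coeff_add, e1, e2, e3, HahnSeries.coeff_single]
    ring
  -- the Faber polynomial of degree 2
  set c : ℚ := 2 * f.coeff 1 with hc
  set P : Polynomial ℚ := Polynomial.X^2 - Polynomial.C c with hP
  have haev : Polynomial.aeval f P = f * f - algebraMap ℚ Ser c := by
    rw [hP]; simp [sq]
  have haevc : ∀ m : ℤ, (Polynomial.aeval f P).coeff m
      = (if m = -2 then 1 else 0) + 2 * g.coeff (m+1) + (g*g).coeff m
        - (if m = 0 then c else 0) := by
    intro m
    rw [haev, HahnSeries.coeff_sub, hff, algebraMap_coeff]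
  have hggz : ∀ m : ℤ, m ≤ 1 → (g*g).coeff m = 0 := by
    intro m hm
    rw [gg_coeff g hg0, Finset.Icc_eq_empty (by omega), Finset.sum_empty]
  have hfab : IsFaber f 2 P := by
    refine ⟨Polynomial.monic_X_pow_sub_C _ two_ne_zero, Polynomial.natDegree_X_pow_sub_C, ?_, ?_⟩
    · rw [show -((2:ℕ):ℤ) = -2 by norm_num, haevc]
      rw [hg0 (-2+1) (by omega), hggz (-2) (by omega)]
      norm_num
    · intro m hm hne
      rw [show -((2:ℕ):ℤ) = -2 by norm_num] at hne
      rw [haevc, hggz m (by omega), if_neg hne]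
      rcases eq_or_ne m 0 with rfl | hm0
      · rw [if_pos rfl]; simp only [zero_add]; rw [hgpos 1 le_rfl, hc]; ring
      · rw [if_neg hm0, hg0 (m+1) (by omega)]; ring
  -- apply the replication identity at index 2, exponent 2k+1
  have hsys' := hsys (1, false) le_rfl 2 one_le_two
  rw [hΦ] at hsys'
  have hrep := hsys' P hfab (2*(k:ℤ)+1)
  have hodd : ¬ ((2:ℤ) ∣ 2*(k:ℤ)+1) := by omega
  have hidx : indexMul (1, false) (1, false) = (1, false) := by simp [indexMul]
  have hLHS : RepLHS (fun a => Φ (indexMul (1,false) (a, false)))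
      (fun a => Φ (indexMul (1,false) (a, true))) 2 (2*(k:ℤ)+1)
      = 2 * f.coeff (4*(k:ℤ)+2) := by
    rw [RepLHS, show Nat.divisorsAntidiagonal 2 = {(1,2),(2,1)} from by decide]
    rw [Finset.sum_insert (by decide), Finset.sum_singleton,
        Finset.sum_insert (by decide), Finset.sum_singleton]
    simp only [hidx, hΦ, Nat.cast_one, Nat.cast_ofNat]
    rw [if_pos (one_dvd _), if_neg hodd,
        if_neg (by rintro ⟨-, h⟩; rw [mul_one] at h; exact hodd h),
        if_neg (by rintro ⟨h, -⟩; exact (by decide : ¬ Even 1) h)]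
    rw [Int.ediv_one, show (2:ℤ) * (2*(k:ℤ)+1) = 4*(k:ℤ)+2 by ring]
    ring
  rw [hLHS, haevc] at hrep
  -- evaluate the right-hand side
  have hne2 : (2*(k:ℤ)+1) ≠ -2 := by omega
  have hne0 : (2*(k:ℤ)+1) ≠ 0 := by omega
  rw [if_neg hne2, if_neg hne0, hgpos (2*(k:ℤ)+1+1) (by omega),
      gg_coeff g hg0] at hrep
  -- split the sum
  have hun : Finset.Icc (1:ℤ) (2*(k:ℤ)+1-1)
      = Finset.Icc (1:ℤ) (k:ℤ) ∪ Finset.Icc ((k:ℤ)+1) (2*(k:ℤ)) := by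
    ext x; simp only [Finset.mem_Icc, Finset.mem_union]; omega
  have hdis : Disjoint (Finset.Icc (1:ℤ) (k:ℤ)) (Finset.Icc ((k:ℤ)+1) (2*(k:ℤ))) := by
    rw [Finset.disjoint_left]; intro x hx hx'
    simp only [Finset.mem_Icc] at hx hx'; omega
  rw [hun, Finset.sum_union hdis] at hrep
  have hrefl : ∑ i ∈ Finset.Icc ((k:ℤ)+1) (2*(k:ℤ)), g.coeff i * g.coeff (2*(k:ℤ)+1-i)
      = ∑ i ∈ Finset.Icc (1:ℤ) (k:ℤ), g.coeff i * g.coeff (2*(k:ℤ)+1-i) := by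
    refine Finset.sum_nbij' (fun a => 2*(k:ℤ)+1-a) (fun a => 2*(k:ℤ)+1-a) ?_ ?_ ?_ ?_ ?_
    · intro a ha; simp only [Finset.mem_Icc] at ha ⊢; omega
    · intro a ha; simp only [Finset.mem_Icc] at ha ⊢; omega
    · intro a _; ring
    · intro a _; ring
    · intro a _; rw [show 2*(k:ℤ)+1-(2*(k:ℤ)+1-a) = a by ring]; ring
  rw [hrefl] at hrep
  -- convert the ℤ-sum to the ℕ-sum of the statement
  have hconv : ∑ i ∈ Finset.Icc (1:ℤ) (k:ℤ), g.coeff i * g.coeff (2*(k:ℤ)+1-i)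
      = ∑ j ∈ Finset.Icc 1 k, f.coeff (j : ℤ) * f.coeff (2 * (k : ℤ) + 1 - (j : ℤ)) := by
    refine Finset.sum_nbij' (fun a => a.toNat) (fun a => (a : ℤ)) ?_ ?_ ?_ ?_ ?_
    · intro a ha; simp only [Finset.mem_Icc] at ha ⊢; omega
    · intro a ha; simp only [Finset.mem_Icc] at ha ⊢; omega
    · intro a ha; simp only [Finset.mem_Icc] at ha; simp; try omega
    · intro a ha; simp only [Finset.mem_Icc] at ha; simp; try omega
    · intro a ha
      simp only [Finset.mem_Icc] at ha
      rw [hgpos a (by omega), hgpos (2*(k:ℤ)+1-a) (by omega),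
          show ((a.toNat : ℤ)) = a by omega]
  rw [hconv] at hrep
  have : (2*(k:ℤ)+1+1) = 2*(k:ℤ)+2 := by ring
  rw [this] at hrep
  linarith [hrep]
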